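/- For β ≥ 2, a ∈ (0,1], b > 0, the determinant of the Hessian of γ_β(a,b) = b·a·log a + β·b·log b equals β/a − (1 + log a)² and is at least 1. -/

import Mathlib

theorem gadget_hessian_det
    (β a b : ℝ) (hβ : 2 ≤ β) (ha : a ∈ Set.Ioc (0 : ℝ) 1) (hb : 0 < b) :
    (!![β / b, 1 + Real.log a; 1 + Real.log a, b / a] : Matrix (Fin 2) (Fin 2) ℝ).det
        = β / a - (1 + Real.log a) ^ 2 ∧
      1 ≤ β / a - (1 + Real.log a) ^ 2 := by
  obtain ⟨ha0, ha1⟩ := ha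
  constructor
  · rw [Matrix.det_fin_two_of]
    field_simp
  · set t : ℝ := -Real.log a with htdef
    have ht : 0 ≤ t := by
      simp only [htdef, neg_nonneg]
      exact Real.log_nonpos ha0.le ha1
    have hexp : Real.exp t = 1 / a := by
      rw [htdef, Real.exp_neg, Real.exp_log ha0]
      exact (one_div a).symm
    have hquad : 1 + t + t ^ 2 / 2 ≤ Real.exp t := Real.quadratic_le_exp_of_nonneg ht
    have h1 : β / a = β * Real.exp t := by rw [hexp]; ring
    have h2 : Real.log a = -t := by rw [htdef]; ring
    rw [h1, h2]
    nlinarith [Real.exp_pos t]
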